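/- arXiv:2508.18759 — 5 statements merged into one kernel-verified Lean document; each statement's English description precedes it below -/
import Mathlib

section
/- Fix natural numbers k < n, a k-dimensional linear subspace V of ℝⁿ, and d ≤ n − k. Let p ∈ ℝⁿ and let Δ be a linear (d−1)-simplex in ℝⁿ ∖ {p} that is transverse to 𝔉(V). Then the join p⋆Δ is a non-degenerate linear d-simplex transverse to 𝔉(V) if and only if π_V(p) ∉ π_V(ASpan(Δ)). -/
noncomputable section

open Metric Set

/-- Two linear subspaces of ℝⁿ are transverse if the dimension of their span is maximal. -/
def Transv {n : ℕ} (V W : Submodule ℝ (EuclideanSpace ℝ (Fin n))) : Prop :=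
  Module.finrank ℝ ↥(V ⊔ W) = min (Module.finrank ℝ ↥V + Module.finrank ℝ ↥W) n

/-- The space of directions of the affine span of a family of points (Gr(Δ)). -/
def simplexDir {n m : ℕ} (v : Fin m → EuclideanSpace ℝ (Fin n)) :
    Submodule ℝ (EuclideanSpace ℝ (Fin n)) :=
  (affineSpan ℝ (Set.range v)).direction

/-- Orthogonal projection of ℝⁿ onto the orthogonal complement of V, as a map ℝⁿ → ℝⁿ. -/
def projPerp {n : ℕ} (V : Submodule ℝ (EuclideanSpace ℝ (Fin n)))
    (x : EuclideanSpace ℝ (Fin n)) : EuclideanSpace ℝ (Fin n) :=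
  (Submodule.orthogonalProjectionOnto Vᗮ x : EuclideanSpace ℝ (Fin n))

/-- Orthogonal projection onto V as a continuous linear endomorphism of ℝⁿ. -/
def projCL {n : ℕ} (V : Submodule ℝ (EuclideanSpace ℝ (Fin n))) :
    EuclideanSpace ℝ (Fin n) →L[ℝ] EuclideanSpace ℝ (Fin n) :=
  V.subtypeL.comp (Submodule.orthogonalProjectionOnto V)

/-- Operator-norm distance between orthogonal projections. -/
def dProj {n : ℕ} (V W : Submodule ℝ (EuclideanSpace ℝ (Fin n))) : ℝ :=
  ‖projCL V - projCL W‖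

/-- `p⋆Δ` is `δ`-semitransverse to `𝔉(V)` in `p`. -/
def SemiT {n m : ℕ} (δ : ℝ) (p : EuclideanSpace ℝ (Fin n))
    (v : Fin m → EuclideanSpace ℝ (Fin n))
    (V : Submodule ℝ (EuclideanSpace ℝ (Fin n))) : Prop :=
  ∀ p' : EuclideanSpace ℝ (Fin n), dist p' p < δ →
    AffineIndependent ℝ (Fin.cons p' v : Fin (m+1) → EuclideanSpace ℝ (Fin n)) ∧
    Transv (simplexDir (Fin.cons p' v : Fin (m+1) → EuclideanSpace ℝ (Fin n))) V

/-- Maximal distance between two vertices of a simplex. -/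
def rMax {n m : ℕ} (v : Fin m → EuclideanSpace ℝ (Fin n)) : ℝ :=
  ⨆ i, ⨆ j, dist (v i) (v j)

/-- Minimal distance between a vertex and the affine span of the opposite face. -/
def rMin {n m : ℕ} (v : Fin m → EuclideanSpace ℝ (Fin n)) : ℝ :=
  ⨅ i, Metric.infDist (v i) (affineSpan ℝ (v '' {i}ᶜ) : Set (EuclideanSpace ℝ (Fin n)))

/-- The degeneracy quantity Λ(Δ). -/
def Lam {n m : ℕ} (v : Fin (m+1) → EuclideanSpace ℝ (Fin n)) : ℝ :=
  sSup {t : ℝ | ∃ lam : Fin m → ℝ,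
    ‖∑ i, lam i • (v i.succ - v 0)‖ = 1 ∧ ∃ i, t = |lam i|}

/-- ε-transversality of a simplex with vertices `v` to the constant foliation `𝔉(V)`. -/
def EpsT {n m : ℕ} (ε : ℝ) (v : Fin (m+1) → EuclideanSpace ℝ (Fin n))
    (V : Submodule ℝ (EuclideanSpace ℝ (Fin n))) : Prop :=
  ∀ D : Submodule ℝ (EuclideanSpace ℝ (Fin n)),
    Module.finrank ℝ ↥D = m → dProj (simplexDir v) D < ε → Transv D V

/-- δ-semitransversality of a simplex in its `i`-th vertex. -/
def STat {n m : ℕ} (δ : ℝ) (w : Fin m → EuclideanSpace ℝ (Fin n)) (i : Fin m)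
    (V : Submodule ℝ (EuclideanSpace ℝ (Fin n))) : Prop :=
  ∀ p' : EuclideanSpace ℝ (Fin n), dist p' (w i) < δ →
    AffineIndependent ℝ (Function.update w i p') ∧
    Transv (simplexDir (Function.update w i p')) V

/-- The coordinate subspace ℝᵏ × {0} of ℝⁿ. -/
def stdFol (n k : ℕ) : Submodule ℝ (EuclideanSpace ℝ (Fin n)) where
  carrier := {x | ∀ i : Fin n, k ≤ (i : ℕ) → x i = 0}
  zero_mem' := fun i _ => rfl
  add_mem' := by
    intro x y hx hy i hi
    show x i + y i = 0
    rw [hx i hi, hy i hi, add_zero]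
  smul_mem' := by
    intro c x hx i hi
    show c * x i = 0
    rw [hx i hi, mul_zero]

/-- Graph of a linear map V → V⊥ as a subspace of ℝⁿ. -/
def graphOf {n : ℕ} {V : Submodule ℝ (EuclideanSpace ℝ (Fin n))}
    (T : ↥V →L[ℝ] ↥Vᗮ) : Submodule ℝ (EuclideanSpace ℝ (Fin n)) :=
  LinearMap.range (V.subtype + Vᗮ.subtype.comp T.toLinearMap)


lemma consImage {E : Type*} {d : ℕ} (p : E) (v : Fin d → E) :
    (Fin.cons p v : Fin (d+1) → E) '' {x | x ≠ 0} = Set.range v := by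
  have h : {x : Fin (d+1) | x ≠ 0} = Set.range Fin.succ := by
    ext x; simp [← Fin.exists_succ_eq, eq_comm]
  rw [h, ← Set.range_comp]
  simp [Function.comp_def]

lemma aiCons {E : Type*} [AddCommGroup E] [Module ℝ E] {d : ℕ}
    (p : E) (v : Fin d → E) (hAI : AffineIndependent ℝ v) :
    AffineIndependent ℝ (Fin.cons p v : Fin (d+1) → E) ↔
      p ∉ affineSpan ℝ (Set.range v) := by
  constructor
  · intro h hmem
    have h2 := h.notMem_affineSpan_diff 0 Set.univ
    have heq : (Set.univ \ {0} : Set (Fin (d+1))) = {x | x ≠ 0} := by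
      ext x; simp
    rw [heq, consImage] at h2
    exact h2 (by simpa using hmem)
  · intro hmem
    apply AffineIndependent.affineIndependent_of_notMem_span (i := 0)
    · let e : Fin d ≃ {y : Fin (d+1) // y ≠ 0} :=
        { toFun := fun i => ⟨i.succ, Fin.succ_ne_zero i⟩
          invFun := fun x => (x.1).pred x.2
          left_inv := fun i => by simp
          right_inv := fun x => by simp }
      rw [← affineIndependent_equiv e]
      have h3 : (fun x : {y : Fin (d+1) // y ≠ 0} =>
          (Fin.cons p v : Fin (d+1) → E) x.1) ∘ e = v := by
        ext i; simp [e]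
      rw [h3]; exact hAI
    · rw [consImage]
      simpa using hmem

lemma projPerp_eq_iff {n : ℕ} (V : Submodule ℝ (EuclideanSpace ℝ (Fin n)))
    (x y : EuclideanSpace ℝ (Fin n)) :
    projPerp V x = projPerp V y ↔ x - y ∈ V := by
  rw [projPerp, projPerp, ← sub_eq_zero, ← Submodule.coe_sub, Submodule.coe_eq_zero,
    ← map_sub, Submodule.orthogonalProjectionOnto_eq_zero_iff, Submodule.orthogonal_orthogonal]

lemma finrank_span_sup {n : ℕ} (K : Submodule ℝ (EuclideanSpace ℝ (Fin n)))
    (u : EuclideanSpace ℝ (Fin n)) (hu : u ∉ K) :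
    Module.finrank ℝ ↥(Submodule.span ℝ {u} ⊔ K) = Module.finrank ℝ ↥K + 1 := by
  have hu0 : u ≠ 0 := fun h => hu (h ▸ K.zero_mem)
  have hdisj : Disjoint (Submodule.span ℝ {u}) K :=
    (Submodule.disjoint_span_singleton' hu0).mpr hu |>.symm
  have h := Submodule.finrank_sup_add_finrank_inf_eq (Submodule.span ℝ {u}) K
  rw [hdisj.eq_bot, finrank_bot, add_zero, finrank_span_singleton hu0] at h
  omega

theorem stmt_1 (n k d : ℕ) (hk : k < n) (hd : d ≤ n - k)
    (V : Submodule ℝ (EuclideanSpace ℝ (Fin n))) (hV : Module.finrank ℝ ↥V = k)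
    (p : EuclideanSpace ℝ (Fin n)) (v : Fin d → EuclideanSpace ℝ (Fin n))
    (hAI : AffineIndependent ℝ v)
    (hp : p ∉ convexHull ℝ (Set.range v))
    (hT : Transv (simplexDir v) V) :
    (AffineIndependent ℝ (Fin.cons p v : Fin (d+1) → EuclideanSpace ℝ (Fin n)) ∧
      Transv (simplexDir (Fin.cons p v : Fin (d+1) → EuclideanSpace ℝ (Fin n))) V) ↔
      projPerp V p ∉
        projPerp V '' (affineSpan ℝ (Set.range v) : Set (EuclideanSpace ℝ (Fin n))) := by
  rcases d with _ | m
  · -- d = 0 : both sides are trivially true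
    have hrange : Set.range v = ∅ := Set.range_eq_empty v
    constructor
    · intro _
      rw [hrange]
      simp
    · intro _
      haveI : Subsingleton (Fin (0+1)) := Fin.subsingleton_one
      refine ⟨affineIndependent_of_subsingleton ℝ _, ?_⟩
      have hdir : simplexDir (Fin.cons p v : Fin 1 → EuclideanSpace ℝ (Fin n)) = ⊥ := by
        rw [simplexDir, Fin.range_cons, hrange]
        simp [direction_affineSpan, vectorSpan_singleton]
      rw [Transv, hdir, bot_sup_eq, hV, finrank_bot]
      omega
  · -- d = m + 1
    have hv0 : v 0 ∈ affineSpan ℝ (Set.range v) := mem_affineSpan ℝ (Set.mem_range_self 0)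
    have hWr : Module.finrank ℝ ↥(simplexDir v) = m := by
      rw [simplexDir, direction_affineSpan]
      exact hAI.finrank_vectorSpan (by simp)
    have hmkn : m + 1 + k ≤ n := by omega
    have hWV : Module.finrank ℝ ↥(simplexDir v ⊔ V) = m + k := by
      rw [Transv, hWr, hV] at hT
      omega
    have hW' : simplexDir (Fin.cons p v : Fin (m+2) → EuclideanSpace ℝ (Fin n)) =
        Submodule.span ℝ {p - v 0} ⊔ simplexDir v := by
      rw [simplexDir, Fin.range_cons, ← affineSpan_insert_affineSpan,
        AffineSubspace.direction_affineSpan_insert hv0, vsub_eq_sub]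
      rfl
    have keymem : projPerp V p ∈
        projPerp V '' (affineSpan ℝ (Set.range v) : Set (EuclideanSpace ℝ (Fin n))) ↔
        p - v 0 ∈ simplexDir v ⊔ V := by
      constructor
      · rintro ⟨x, hx, hxe⟩
        have hpx : p - x ∈ V := by
          have h1 := (projPerp_eq_iff V x p).mp hxe
          have := V.neg_mem h1
          rwa [neg_sub] at this
        have hx0 : x - v 0 ∈ simplexDir v := by
          have := AffineSubspace.vsub_mem_direction hx hv0
          rwa [vsub_eq_sub] at this
        have hsum : p - v 0 = (x - v 0) + (p - x) := by abel
        rw [hsum]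
        exact Submodule.add_mem _ (Submodule.mem_sup_left hx0) (Submodule.mem_sup_right hpx)
      · intro h
        rcases Submodule.mem_sup.mp h with ⟨w, hw, t, ht, hwt⟩
        refine ⟨w + v 0, ?_, ?_⟩
        · have := AffineSubspace.vadd_mem_of_mem_direction
            (show w ∈ (affineSpan ℝ (Set.range v)).direction from hw) hv0
          rwa [vadd_eq_add] at this
        · rw [projPerp_eq_iff]
          have heq : (w + v 0) - p = -t := by
            rw [← eq_sub_iff_add_eq.mp hwt]; abel
          rw [heq]
          exact V.neg_mem ht
    constructor
    · rintro ⟨hAI', hT'⟩ hmem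
      have hu : p - v 0 ∈ simplexDir v ⊔ V := keymem.mp hmem
      have hsup : simplexDir (Fin.cons p v : Fin (m+2) → EuclideanSpace ℝ (Fin n)) ⊔ V =
          simplexDir v ⊔ V := by
        rw [hW', sup_assoc]
        exact sup_eq_right.mpr (Submodule.span_le.mpr (Set.singleton_subset_iff.mpr hu))
      have hW'r : Module.finrank ℝ
          ↥(simplexDir (Fin.cons p v : Fin (m+2) → EuclideanSpace ℝ (Fin n))) = m + 1 := by
        rw [simplexDir, direction_affineSpan]
        exact hAI'.finrank_vectorSpan (by simp)
      rw [Transv, hW'r, hV, hsup, hWV] at hT'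
      omega
    · intro hmem
      have hu : p - v 0 ∉ simplexDir v ⊔ V := fun h => hmem (keymem.mpr h)
      have hpspan : p ∉ affineSpan ℝ (Set.range v) := by
        intro h
        apply hu
        apply Submodule.mem_sup_left
        have := AffineSubspace.vsub_mem_direction h hv0
        rwa [vsub_eq_sub] at this
      have hAI' := (aiCons p v hAI).mpr hpspan
      refine ⟨hAI', ?_⟩
      have hW'r : Module.finrank ℝ
          ↥(simplexDir (Fin.cons p v : Fin (m+2) → EuclideanSpace ℝ (Fin n))) = m + 1 := by
        rw [simplexDir, direction_affineSpan]
        exact hAI'.finrank_vectorSpan (by simp)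
      rw [Transv, hW'r, hV, hW', sup_assoc, finrank_span_sup _ _ ?_, hWV]
      · omega
      · -- need u ∉ W ⊔ V in sup form matching
        exact hu
end
end

section
/- Fix natural numbers k < n and a k-dimensional linear subspace V of ℝⁿ. Let δ > 0, let p ∈ ℝⁿ, and let Δ be a linear d-simplex in ℝⁿ with d < n − k and p ∉ ASpan(Δ). Then the join p⋆Δ is δ-semitransverse to 𝔉(V) in p if and only if Δ is transverse to 𝔉(V) and the open ball B(π_V(p), δ) in V⊥ is disjoint from π_V(ASpan(Δ)). -/
noncomputable section

open Metric Set

-- aux lemmas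
lemma aux_projPerp_sub {n : ℕ} (V : Submodule ℝ (EuclideanSpace ℝ (Fin n))) (x y) :
    projPerp V x - projPerp V y = projPerp V (x - y) := by
  simp [projPerp, map_sub]

lemma aux_norm_projPerp_le {n : ℕ} (V : Submodule ℝ (EuclideanSpace ℝ (Fin n))) (x) :
    ‖projPerp V x‖ ≤ ‖x‖ := by
  have h := (Submodule.orthogonalProjectionOnto Vᗮ).le_opNorm x
  have := Submodule.orthogonalProjectionOnto_norm_le Vᗮ
  calc ‖projPerp V x‖ = ‖Submodule.orthogonalProjectionOnto Vᗮ x‖ := rfl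
    _ ≤ ‖Submodule.orthogonalProjectionOnto Vᗮ‖ * ‖x‖ := h
    _ ≤ 1 * ‖x‖ := by gcongr
    _ = ‖x‖ := one_mul _

lemma aux_dist_projPerp_le {n : ℕ} (V : Submodule ℝ (EuclideanSpace ℝ (Fin n))) (x y) :
    dist (projPerp V x) (projPerp V y) ≤ dist x y := by
  rw [dist_eq_norm, dist_eq_norm, aux_projPerp_sub]
  exact aux_norm_projPerp_le V _

lemma aux_projPerp_eq_zero_iff {n : ℕ} (V : Submodule ℝ (EuclideanSpace ℝ (Fin n))) (x) :
    projPerp V x = 0 ↔ x ∈ V := by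
  rw [projPerp, Submodule.coe_eq_zero, Submodule.orthogonalProjectionOnto_eq_zero_iff,
    Submodule.orthogonal_orthogonal]

lemma aux_sub_projPerp_mem {n : ℕ} (V : Submodule ℝ (EuclideanSpace ℝ (Fin n))) (x) :
    x - projPerp V x ∈ V := by
  have h := (Submodule.orthogonalProjectionOnto V x).2
  have hx : (Submodule.orthogonalProjectionOnto V x : EuclideanSpace ℝ (Fin n)) + projPerp V x = x :=
    Submodule.starProjection_add_starProjection_orthogonal (K := V) x
  rw [← eq_sub_of_add_eq hx]; exact h

lemma aux_transv_iff {n k m : ℕ} {V W : Submodule ℝ (EuclideanSpace ℝ (Fin n))}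
    (hV : Module.finrank ℝ V = k) (hW : Module.finrank ℝ W = m) (h : m + k ≤ n) :
    Transv W V ↔ W ⊓ V = ⊥ := by
  unfold Transv
  rw [hV, hW, min_eq_left h]
  have hsum := Submodule.finrank_sup_add_finrank_inf_eq W V
  rw [hV, hW] at hsum
  constructor
  · intro ht
    have : Module.finrank ℝ ↥(W ⊓ V) = 0 := by omega
    exact Submodule.finrank_eq_zero.mp this
  · intro hb
    rw [hb] at hsum
    simp only [finrank_bot] at hsum
    omega

lemma aux_finrank_simplexDir {n m : ℕ} {v : Fin (m+1) → EuclideanSpace ℝ (Fin n)}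
    (h : AffineIndependent ℝ v) : Module.finrank ℝ (simplexDir v) = m := by
  unfold simplexDir
  rw [direction_affineSpan]
  exact h.finrank_vectorSpan (by simp)

lemma aux_simplexDir_cons {n d : ℕ} (p' : EuclideanSpace ℝ (Fin n))
    (v : Fin (d+1) → EuclideanSpace ℝ (Fin n)) :
    simplexDir (Fin.cons p' v : Fin (d+1+1) → EuclideanSpace ℝ (Fin n)) =
      Submodule.span ℝ {p' -ᵥ v 0} ⊔ simplexDir v := by
  unfold simplexDir
  rw [Fin.range_cons, ← affineSpan_insert_affineSpan,
    AffineSubspace.direction_affineSpan_insert (mem_affineSpan ℝ (Set.mem_range_self 0))]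

lemma aux_cons_image {n d : ℕ} (p' : EuclideanSpace ℝ (Fin n))
    (v : Fin (d+1) → EuclideanSpace ℝ (Fin n)) :
    (Fin.cons p' v : Fin (d+1+1) → EuclideanSpace ℝ (Fin n)) '' {x | x ≠ 0} = Set.range v := by
  ext y
  constructor
  · rintro ⟨x, hx, rfl⟩
    obtain ⟨j, rfl⟩ := Fin.eq_succ_of_ne_zero hx
    exact ⟨j, by simp⟩
  · rintro ⟨j, rfl⟩
    exact ⟨j.succ, Fin.succ_ne_zero j, by simp⟩

lemma aux_cons_affineIndependent_iff {n d : ℕ} (p' : EuclideanSpace ℝ (Fin n))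
    {v : Fin (d+1) → EuclideanSpace ℝ (Fin n)} (hAI : AffineIndependent ℝ v) :
    AffineIndependent ℝ (Fin.cons p' v : Fin (d+1+1) → EuclideanSpace ℝ (Fin n)) ↔
      p' ∉ affineSpan ℝ (Set.range v) := by
  constructor
  · intro h
    have h2 := h.notMem_affineSpan_diff 0 Set.univ
    have : Set.univ \ {(0 : Fin (d+1+1))} = {x | x ≠ 0} := by ext x; simp
    rw [this, aux_cons_image] at h2
    simpa using h2
  · intro h
    apply AffineIndependent.affineIndependent_of_notMem_span (i := (0 : Fin (d+1+1)))
    · have key := hAI.comp_embedding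
        (⟨fun x : {y : Fin (d+1+1) // y ≠ 0} => x.1.pred x.2,
          fun a b hab => Subtype.ext (by simpa [Fin.pred_inj] using hab)⟩ :
          {y : Fin (d+1+1) // y ≠ 0} ↪ Fin (d+1))
      convert key using 1
      · rfl
      funext x
      obtain ⟨x, hx⟩ := x
      obtain ⟨j, rfl⟩ := Fin.eq_succ_of_ne_zero hx
      exact congrArg v (Fin.pred_succ j (h := hx)).symm
    · rwa [aux_cons_image]

theorem stmt_3 (n k d : ℕ) (hk : k < n) (hd : d < n - k)
    (V : Submodule ℝ (EuclideanSpace ℝ (Fin n))) (hV : Module.finrank ℝ ↥V = k)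
    (δ : ℝ) (hδ : 0 < δ)
    (p : EuclideanSpace ℝ (Fin n)) (v : Fin (d+1) → EuclideanSpace ℝ (Fin n))
    (hAI : AffineIndependent ℝ v)
    (hp : p ∉ affineSpan ℝ (Set.range v)) :
    SemiT δ p v V ↔
      (Transv (simplexDir v) V ∧
        Metric.ball (projPerp V p) δ ∩
          (projPerp V '' (affineSpan ℝ (Set.range v) : Set (EuclideanSpace ℝ (Fin n)))) = ∅) := by
  have hdk : d + 1 + k ≤ n := by omega
  have hD : Module.finrank ℝ (simplexDir v) = d := aux_finrank_simplexDir hAI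
  have hv0 : v 0 ∈ affineSpan ℝ (Set.range v) := mem_affineSpan ℝ (Set.mem_range_self 0)
  -- key: for affinely independent cons, transversality is the inf-trivial condition
  have keyW : ∀ p' : EuclideanSpace ℝ (Fin n),
      AffineIndependent ℝ (Fin.cons p' v : Fin (d+1+1) → EuclideanSpace ℝ (Fin n)) →
      (Transv (simplexDir (Fin.cons p' v : Fin (d+1+1) → EuclideanSpace ℝ (Fin n))) V ↔
        simplexDir (Fin.cons p' v : Fin (d+1+1) → EuclideanSpace ℝ (Fin n)) ⊓ V = ⊥) := by
    intro p' hA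
    exact aux_transv_iff hV (aux_finrank_simplexDir hA) hdk
  constructor
  · intro h
    obtain ⟨hA, hT⟩ := h p (by simpa using hδ)
    have hWbot : simplexDir (Fin.cons p v : Fin (d+1+1) → EuclideanSpace ℝ (Fin n)) ⊓ V = ⊥ :=
      (keyW p hA).mp hT
    constructor
    · refine (aux_transv_iff hV hD (by omega)).mpr ?_
      rw [eq_bot_iff] at hWbot ⊢
      refine le_trans ?_ hWbot
      exact inf_le_inf_right V (by rw [aux_simplexDir_cons]; exact le_sup_right)
    · rw [Set.eq_empty_iff_forall_notMem]
      rintro x ⟨hxball, q, hq, rfl⟩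
      set p' := projPerp V q + (p - projPerp V p) with hp'def
      have hsub : p' - p = projPerp V q - projPerp V p := by rw [hp'def]; abel
      have hdist : dist p' p < δ := by
        rw [dist_eq_norm, hsub, ← dist_eq_norm]
        exact Metric.mem_ball.mp hxball
      obtain ⟨hA', hT'⟩ := h p' hdist
      have hp'notin : p' ∉ affineSpan ℝ (Set.range v) :=
        (aux_cons_affineIndependent_iff p' hAI).mp hA'
      have hne : p' ≠ q := fun hqe => hp'notin (hqe ▸ hq)
      have hp'qV : p' - q ∈ V := by
        have : p' - q = (p - projPerp V p) - (q - projPerp V q) := by rw [hp'def]; abel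
        rw [this]
        exact Submodule.sub_mem V (aux_sub_projPerp_mem V p) (aux_sub_projPerp_mem V q)
      have hp'qW : p' - q ∈ simplexDir (Fin.cons p' v : Fin (d+1+1) → EuclideanSpace ℝ (Fin n)) := by
        rw [aux_simplexDir_cons]
        have h1 : p' -ᵥ v 0 ∈ Submodule.span ℝ {p' -ᵥ v 0} := Submodule.mem_span_singleton_self _
        have h2 : q -ᵥ v 0 ∈ simplexDir v := AffineSubspace.vsub_mem_direction hq hv0
        have : p' - q = (p' -ᵥ v 0) - (q -ᵥ v 0) := by simp
        rw [this]
        exact Submodule.sub_mem _ (Submodule.mem_sup_left h1) (Submodule.mem_sup_right h2)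
      have : p' - q ∈ (⊥ : Submodule ℝ (EuclideanSpace ℝ (Fin n))) := by
        rw [← (keyW p' hA').mp hT']
        exact Submodule.mem_inf.mpr ⟨hp'qW, hp'qV⟩
      rw [Submodule.mem_bot, sub_eq_zero] at this
      exact hne this
  · rintro ⟨hTD, hdisj⟩ p' hdist
    have hball : projPerp V p' ∈ Metric.ball (projPerp V p) δ :=
      Metric.mem_ball.mpr (lt_of_le_of_lt (aux_dist_projPerp_le V p' p) hdist)
    have hp'notin : p' ∉ affineSpan ℝ (Set.range v) := by
      intro hmem
      have : projPerp V p' ∈ Metric.ball (projPerp V p) δ ∩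
          (projPerp V '' (affineSpan ℝ (Set.range v) : Set (EuclideanSpace ℝ (Fin n)))) :=
        ⟨hball, ⟨p', hmem, rfl⟩⟩
      rw [hdisj] at this
      exact this
    have hA' := (aux_cons_affineIndependent_iff p' hAI).mpr hp'notin
    refine ⟨hA', (keyW p' hA').mpr ?_⟩
    rw [eq_bot_iff]
    rintro w hw
    obtain ⟨hwW, hwV⟩ := Submodule.mem_inf.mp hw
    rw [aux_simplexDir_cons] at hwW
    obtain ⟨a, ha, b, hb, rfl⟩ := Submodule.mem_sup.mp hwW
    obtain ⟨t, rfl⟩ := Submodule.mem_span_singleton.mp ha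
    have hDbot : simplexDir v ⊓ V = ⊥ := (aux_transv_iff hV hD (by omega)).mp hTD
    by_cases ht : t = 0
    · subst ht
      simp only [zero_smul, zero_add] at hwV ⊢
      have : b ∈ simplexDir v ⊓ V := Submodule.mem_inf.mpr ⟨hb, hwV⟩
      rw [hDbot] at this
      exact this
    · exfalso
      -- q := p' - t⁻¹ • w lies in the affine span and p' - q ∈ V
      set w := t • (p' -ᵥ v 0) + b with hwdef
      set q := p' - t⁻¹ • w with hqdef
      have hqmem : q ∈ affineSpan ℝ (Set.range v) := by
        have hq' : q = (-(t⁻¹) • b) +ᵥ v 0 := by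
          rw [hqdef, hwdef]
          simp only [vsub_eq_sub, smul_add, smul_smul, inv_mul_cancel₀ ht, one_smul]
          show p' - (p' - v 0 + t⁻¹ • b) = -(t⁻¹) • b + v 0
          module
        rw [hq']
        exact AffineSubspace.vadd_mem_of_mem_direction
          (Submodule.smul_mem _ _ hb) hv0
      have hpqV : p' - q ∈ V := by
        have : p' - q = t⁻¹ • w := by rw [hqdef]; abel
        rw [this]
        exact Submodule.smul_mem _ _ hwV
      have hproj : projPerp V p' = projPerp V q := by
        have h0 : projPerp V p' - projPerp V q = 0 := by
          rw [aux_projPerp_sub, aux_projPerp_eq_zero_iff]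
          exact hpqV
        exact sub_eq_zero.mp h0
      have : projPerp V p' ∈ Metric.ball (projPerp V p) δ ∩
          (projPerp V '' (affineSpan ℝ (Set.range v) : Set (EuclideanSpace ℝ (Fin n)))) :=
        ⟨hball, ⟨q, hqmem, hproj.symm⟩⟩
      rw [hdisj] at this
      exact this
end
end

section
/- Fix natural numbers k < n and a k-dimensional linear subspace V of ℝⁿ. Let δ > 0, let p ∈ ℝⁿ, and let Δ be a linear d-simplex in ℝⁿ with d < n − k, p ∉ ASpan(Δ), and whose affine span contains the origin. Let π_Δ denote the orthogonal projection of ℝⁿ onto Gr(Δ)⊥. Then the join p⋆Δ is δ-semitransverse to 𝔉(V) in p if and only if Δ is transverse to 𝔉(V) and the open ball B(π_Δ(p), δ) in Gr(Δ)⊥ is disjoint from π_Δ(V). -/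
noncomputable section

open Metric Set

section helpers
variable {n : ℕ} (D : Submodule ℝ (EuclideanSpace ℝ (Fin n)))

lemma projPerp_smul' (c : ℝ) (x : EuclideanSpace ℝ (Fin n)) :
    projPerp D (c • x) = c • projPerp D x := by simp [projPerp]

lemma projPerp_add' (x y : EuclideanSpace ℝ (Fin n)) :
    projPerp D (x + y) = projPerp D x + projPerp D y := by simp [projPerp]

lemma projPerp_sub' (x y : EuclideanSpace ℝ (Fin n)) :
    projPerp D (x - y) = projPerp D x - projPerp D y := by simp [projPerp]

lemma sub_projPerp_mem' (x : EuclideanSpace ℝ (Fin n)) : x - projPerp D x ∈ D := by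
  have h := Submodule.sub_starProjection_mem_orthogonal (K := Dᗮ) x
  rwa [Submodule.orthogonal_orthogonal] at h

lemma projPerp_eq_zero_of_mem' {x : EuclideanSpace ℝ (Fin n)} (hx : x ∈ D) :
    projPerp D x = 0 := by
  have : x ∈ Dᗮᗮ := by rwa [Submodule.orthogonal_orthogonal]
  simp [projPerp, Submodule.orthogonalProjectionOnto_apply_of_mem_orthogonal this]

lemma norm_projPerp_le' (x : EuclideanSpace ℝ (Fin n)) : ‖projPerp D x‖ ≤ ‖x‖ :=
  calc ‖projPerp D x‖ ≤ ‖Submodule.orthogonalProjectionOnto Dᗮ‖ * ‖x‖ := (Submodule.orthogonalProjectionOnto Dᗮ).le_opNorm x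
    _ ≤ 1 * ‖x‖ := mul_le_mul_of_nonneg_right (Submodule.orthogonalProjectionOnto_norm_le _) (norm_nonneg x)
    _ = ‖x‖ := one_mul _

end helpers

theorem stmt_4 (n k d : ℕ) (hk : k < n) (hd : d < n - k)
    (V : Submodule ℝ (EuclideanSpace ℝ (Fin n))) (hV : Module.finrank ℝ ↥V = k)
    (δ : ℝ) (hδ : 0 < δ)
    (p : EuclideanSpace ℝ (Fin n)) (v : Fin (d+1) → EuclideanSpace ℝ (Fin n))
    (hAI : AffineIndependent ℝ v)
    (hp : p ∉ affineSpan ℝ (Set.range v))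
    (h0 : (0 : EuclideanSpace ℝ (Fin n)) ∈ affineSpan ℝ (Set.range v)) :
    SemiT δ p v V ↔
      (Transv (simplexDir v) V ∧
        Metric.ball (projPerp (simplexDir v) p) δ ∩
          (projPerp (simplexDir v) '' (V : Set (EuclideanSpace ℝ (Fin n)))) = ∅) := by
  classical
  set D := simplexDir v with hDdef
  have hmem : ∀ x : EuclideanSpace ℝ (Fin n), x ∈ affineSpan ℝ (Set.range v) ↔ x ∈ D := by
    intro x
    rw [← AffineSubspace.vsub_right_mem_direction_iff_mem h0 x]
    simp [hDdef, simplexDir, vsub_eq_sub, sub_zero]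
  have hDrank : Module.finrank ℝ ↥D = d := by
    have h := hAI.finrank_vectorSpan (Fintype.card_fin (d+1))
    rw [hDdef]
    unfold simplexDir
    rwa [direction_affineSpan]
  have hcons : ∀ p' : EuclideanSpace ℝ (Fin n),
      simplexDir (Fin.cons p' v : Fin (d+1+1) → EuclideanSpace ℝ (Fin n)) =
        Submodule.span ℝ {p'} ⊔ D := by
    intro p'
    show (affineSpan ℝ (Set.range (Fin.cons p' v))).direction = _
    rw [Fin.range_cons, ← affineSpan_insert_affineSpan,
      AffineSubspace.direction_affineSpan_insert h0]
    simp [hDdef, simplexDir, vsub_eq_sub, sub_zero]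
  have hrank' : ∀ p' ∉ D, Module.finrank ℝ ↥(Submodule.span ℝ {p'} ⊔ D) = d + 1 := by
    intro p' hp'
    have hp0 : p' ≠ 0 := fun h => hp' (h ▸ D.zero_mem)
    have hinf : Submodule.span ℝ {p'} ⊓ D = ⊥ := by
      rw [Submodule.eq_bot_iff]
      rintro x ⟨hx1, hx2⟩
      obtain ⟨c, rfl⟩ := Submodule.mem_span_singleton.1 hx1
      rcases eq_or_ne c 0 with rfl | hc
      · simp
      · exact absurd (by simpa [smul_smul, inv_mul_cancel₀ hc] using D.smul_mem c⁻¹ hx2) hp'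
    have h := Submodule.finrank_sup_add_finrank_inf_eq (Submodule.span ℝ {p'}) D
    rw [hinf, finrank_span_singleton hp0, hDrank, finrank_bot] at h
    omega
  have hAIiff : ∀ p' : EuclideanSpace ℝ (Fin n),
      AffineIndependent ℝ (Fin.cons p' v : Fin (d+1+1) → EuclideanSpace ℝ (Fin n)) ↔ p' ∉ D := by
    intro p'
    rw [affineIndependent_iff_finrank_vectorSpan_eq ℝ _
      (Fintype.card_fin (d+1+1) : Fintype.card (Fin (d+1+1)) = (d+1)+1)]
    rw [← direction_affineSpan]
    have hdir : (affineSpan ℝ (Set.range (Fin.cons p' v))).direction =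
        Submodule.span ℝ {p'} ⊔ D := hcons p'
    rw [hdir]
    constructor
    · intro h hpD
      have heq : Submodule.span ℝ {p'} ⊔ D = D := by
        rw [sup_eq_right]
        exact Submodule.span_le.2 (by simpa using hpD)
      rw [heq, hDrank] at h
      omega
    · exact hrank' p'
  have hTransv : ∀ W : Submodule ℝ (EuclideanSpace ℝ (Fin n)),
      Module.finrank ℝ ↥W + k ≤ n → (Transv W V ↔ W ⊓ V = ⊥) := by
    intro W hW
    have hsum := Submodule.finrank_sup_add_finrank_inf_eq W V
    unfold Transv
    rw [hV, min_eq_left hW]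
    constructor
    · intro h
      have h0' : Module.finrank ℝ ↥(W ⊓ V) = 0 := by omega
      exact Submodule.finrank_eq_zero.1 h0'
    · intro h
      rw [h, finrank_bot] at hsum
      omega
  have hballiff : (Metric.ball (projPerp D p) δ ∩
      (projPerp D '' (V : Set (EuclideanSpace ℝ (Fin n)))) = ∅)
      ↔ ∀ x ∈ V, δ ≤ dist (projPerp D p) (projPerp D x) := by
    rw [Set.eq_empty_iff_forall_notMem]
    constructor
    · intro h x hx
      by_contra hlt
      exact h (projPerp D x)
        ⟨by simpa [Metric.mem_ball, dist_comm] using lt_of_not_ge hlt, ⟨x, hx, rfl⟩⟩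
    · rintro h y ⟨hy1, x, hx, rfl⟩
      exact absurd (h x hx) (not_le.2 (by simpa [dist_comm] using Metric.mem_ball.1 hy1))
  constructor
  · intro hS
    have hpD : p ∉ D := fun h => hp ((hmem p).2 h)
    obtain ⟨hAIp, hTp⟩ := hS p (by simpa using hδ)
    rw [hcons p] at hTp
    have hTp' : (Submodule.span ℝ {p} ⊔ D) ⊓ V = ⊥ := by
      apply (hTransv _ (by rw [hrank' p hpD]; omega)).1 hTp
    refine ⟨(hTransv D (by rw [hDrank]; omega)).2 ?_, ?_⟩
    · have hle : D ⊓ V ≤ ⊥ := hTp' ▸ inf_le_inf_right V le_sup_right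
      exact le_bot_iff.1 hle
    · rw [hballiff]
      intro x hx
      by_contra hlt
      push_neg at hlt
      set p' := p - (projPerp D p - projPerp D x) with hp'def
      have hdist : dist p' p < δ := by
        rw [dist_eq_norm]
        have h1 : p' - p = -(projPerp D p - projPerp D x) := by rw [hp'def]; abel
        rw [h1, norm_neg, ← dist_eq_norm]
        exact hlt
      obtain ⟨hAI', hT'⟩ := hS p' hdist
      have hsub : p' - x ∈ D := by
        have h1 : p' - x = (p - x) - projPerp D (p - x) := by
          rw [projPerp_sub', hp'def]; abel
        rw [h1]
        exact sub_projPerp_mem' D (p - x)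
      rcases eq_or_ne x 0 with rfl | hx0
      · exact (hAIiff p').1 hAI' (by simpa using hsub)
      · have hp'D : p' ∉ D := (hAIiff p').1 hAI'
        rw [hcons p'] at hT'
        have hT'' := (hTransv _ (by rw [hrank' p' hp'D]; omega)).1 hT'
        have hxmem : x ∈ Submodule.span ℝ {p'} ⊔ D := by
          have h1 : x = p' - (p' - x) := by abel
          rw [h1]
          exact Submodule.sub_mem _
            (Submodule.mem_sup_left (Submodule.mem_span_singleton_self p'))
            (Submodule.mem_sup_right hsub)
        have : x ∈ (⊥ : Submodule ℝ (EuclideanSpace ℝ (Fin n))) := hT'' ▸ ⟨hxmem, hx⟩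
        exact hx0 (by simpa using this)
  · rintro ⟨hT, hball⟩ p' hp'dist
    rw [hballiff] at hball
    have hDV : D ⊓ V = ⊥ := (hTransv D (by rw [hDrank]; omega)).1 hT
    have key : ∀ x ∈ V, projPerp D x = projPerp D p' → False := by
      intro x hx hxe
      have h1 : δ ≤ dist (projPerp D p) (projPerp D x) := hball x hx
      rw [hxe] at h1
      have h2 : dist (projPerp D p) (projPerp D p') ≤ dist p p' := by
        rw [dist_eq_norm, dist_eq_norm, ← projPerp_sub']
        exact norm_projPerp_le' D (p - p')
      have h3 : dist p p' < δ := by rwa [dist_comm]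
      linarith
    have hp'D : p' ∉ D := by
      intro h
      exact key 0 V.zero_mem
        (by rw [projPerp_eq_zero_of_mem' D h, projPerp_eq_zero_of_mem' D D.zero_mem])
    refine ⟨(hAIiff p').2 hp'D, ?_⟩
    rw [hcons p']
    apply (hTransv _ (by rw [hrank' p' hp'D]; omega)).2
    rw [Submodule.eq_bot_iff]
    rintro w ⟨hw1, hw2⟩
    obtain ⟨y, hy, z, hz, rfl⟩ := Submodule.mem_sup.1 hw1
    obtain ⟨c, rfl⟩ := Submodule.mem_span_singleton.1 hy
    rcases eq_or_ne c 0 with rfl | hc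
    · have h1 : z ∈ D ⊓ V := ⟨hz, by simpa using hw2⟩
      rw [hDV] at h1
      simpa using h1
    · exfalso
      apply key (c⁻¹ • (c • p' + z)) (V.smul_mem _ hw2)
      rw [projPerp_smul', projPerp_add', projPerp_smul',
        projPerp_eq_zero_of_mem' D hz, add_zero, smul_smul, inv_mul_cancel₀ hc, one_smul]
end
end

section
/- Fix natural numbers k < n and let 𝔉 denote the constant foliation of ℝⁿ = ℝᵏ × ℝ^{n−k} by the translates of ℝᵏ × {0}. Let ε > 0 and C ∈ ℕ, let p ∈ ℝⁿ, and let 𝒟 be a finite set of C linear simplices in ℝⁿ, each transverse to 𝔉. Then there exist δ > 0 and a point p' ∈ B(p, ε) such that B(p', δ) ⊆ B(p, ε) and for every simplex Δ ∈ 𝒟 of dimension at most n − k − 1 the join p'⋆Δ is a non-degenerate linear simplex that is δ-semitransverse to 𝔉 in p'. -/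
noncomputable section

open Metric Set

/-- Auxiliary: the coordinate subspace has dimension at most `k`. -/
lemma stdFol_finrank_le (n k : ℕ) (hk : k ≤ n) :
    Module.finrank ℝ (stdFol n k) ≤ k := by
  classical
  let f : EuclideanSpace ℝ (Fin n) →ₗ[ℝ] EuclideanSpace ℝ (Fin k) :=
    (WithLp.linearEquiv 2 ℝ (Fin k → ℝ)).symm.toLinearMap ∘ₗ LinearMap.funLeft ℝ ℝ (Fin.castLE hk) ∘ₗ
      (WithLp.linearEquiv 2 ℝ (Fin n → ℝ)).toLinearMap
  have hinj : Function.Injective (f.comp (stdFol n k).subtype) := by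
    rw [← LinearMap.ker_eq_bot, LinearMap.ker_eq_bot']
    intro x hx
    ext i
    rcases lt_or_ge (i : ℕ) k with h | h
    · have h2 : (x : EuclideanSpace ℝ (Fin n)) (Fin.castLE hk ⟨(i:ℕ), h⟩) = 0 :=
        by have := congrArg (fun y : EuclideanSpace ℝ (Fin k) => y ⟨(i : ℕ), h⟩) hx; simpa [f] using this
      have h3 : Fin.castLE hk ⟨(i:ℕ), h⟩ = i := rfl
      rwa [h3] at h2
    · exact x.2 i h
  calc Module.finrank ℝ (stdFol n k)
      ≤ Module.finrank ℝ (EuclideanSpace ℝ (Fin k)) :=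
        LinearMap.finrank_le_finrank_of_injective hinj
    _ = k := finrank_euclideanSpace_fin

/-- Auxiliary key lemma: adding an apex in general position to a transverse simplex. -/
lemma key_lemma {n m : ℕ} (v : Fin (m+1) → EuclideanSpace ℝ (Fin n))
    (V : Submodule ℝ (EuclideanSpace ℝ (Fin n)))
    (hdisj : simplexDir v ⊓ V = ⊥)
    (hGr : Module.finrank ℝ (simplexDir v) = m)
    (hdim : m + 1 + Module.finrank ℝ V ≤ n)
    (p'' : EuclideanSpace ℝ (Fin n))
    (hp : p'' - v 0 ∉ simplexDir v ⊔ V) :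
    AffineIndependent ℝ (Fin.cons p'' v : Fin (m+1+1) → EuclideanSpace ℝ (Fin n)) ∧
    Transv (simplexDir (Fin.cons p'' v : Fin (m+1+1) → EuclideanSpace ℝ (Fin n))) V := by
  have hwne : p'' - v 0 ≠ 0 := by
    intro h
    exact hp (h ▸ Submodule.zero_mem _)
  have hwGr : p'' - v 0 ∉ simplexDir v := fun h => hp (Submodule.mem_sup_left h)
  have hGrv : simplexDir v = vectorSpan ℝ (Set.range v) := direction_affineSpan ℝ _
  have hmem0 : p'' ∈ Set.range (Fin.cons p'' v : Fin (m+1+1) → EuclideanSpace ℝ (Fin n)) :=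
    ⟨0, rfl⟩
  have hmemv : ∀ i, v i ∈ Set.range (Fin.cons p'' v : Fin (m+1+1) → EuclideanSpace ℝ (Fin n)) :=
    fun i => ⟨i.succ, Fin.cons_succ _ _ _⟩
  have hD : simplexDir (Fin.cons p'' v : Fin (m+1+1) → EuclideanSpace ℝ (Fin n))
      = simplexDir v ⊔ Submodule.span ℝ {p'' - v 0} := by
    rw [simplexDir, direction_affineSpan]
    apply le_antisymm
    · rw [vectorSpan_eq_span_vsub_set_right ℝ hmem0, Submodule.span_le]
      rintro x ⟨q, hq, rfl⟩
      rw [Fin.range_cons] at hq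
      rcases hq with rfl | ⟨i, rfl⟩
      · simp
      · have h1 : v i - v 0 ∈ simplexDir v := by
          rw [hGrv]
          have := vsub_mem_vectorSpan ℝ (Set.mem_range_self (f := v) i)
            (Set.mem_range_self (f := v) 0)
          rwa [vsub_eq_sub] at this
        have h2 : v i -ᵥ p'' = (v i - v 0) - (p'' - v 0) := by
          rw [vsub_eq_sub]; abel
        show v i -ᵥ p'' ∈ (simplexDir v ⊔ Submodule.span ℝ {p'' - v 0})
        rw [h2]
        exact Submodule.sub_mem _ (Submodule.mem_sup_left h1)
          (Submodule.mem_sup_right (Submodule.mem_span_singleton_self _))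
    · apply sup_le
      · rw [hGrv]
        exact vectorSpan_mono ℝ (by rw [Fin.range_cons]; exact Set.subset_insert _ _)
      · rw [Submodule.span_le, Set.singleton_subset_iff]
        have := vsub_mem_vectorSpan ℝ hmem0 (hmemv 0)
        rwa [vsub_eq_sub] at this
  have hinf : simplexDir v ⊓ Submodule.span ℝ {p'' - v 0} = ⊥ := by
    rw [eq_bot_iff]
    intro x hx
    rw [Submodule.mem_inf] at hx
    obtain ⟨hxG, hxs⟩ := hx
    obtain ⟨t, rfl⟩ := Submodule.mem_span_singleton.1 hxs
    rcases eq_or_ne t 0 with rfl | ht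
    · simp
    · exfalso
      apply hwGr
      have h : p'' - v 0 = t⁻¹ • (t • (p'' - v 0)) := by
        rw [smul_smul, inv_mul_cancel₀ ht, one_smul]
      rw [h]
      exact Submodule.smul_mem _ _ hxG
  have hfinD : Module.finrank ℝ
      (simplexDir (Fin.cons p'' v : Fin (m+1+1) → EuclideanSpace ℝ (Fin n))) = m + 1 := by
    rw [hD]
    have h2 := Submodule.finrank_sup_add_finrank_inf_eq (simplexDir v)
      (Submodule.span ℝ {p'' - v 0})
    rw [hinf, finrank_span_singleton hwne, hGr] at h2
    simpa using h2
  have hAIcons : AffineIndependent ℝ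
      (Fin.cons p'' v : Fin (m+1+1) → EuclideanSpace ℝ (Fin n)) := by
    rw [affineIndependent_iff_finrank_vectorSpan_eq ℝ _
      (by simp : Fintype.card (Fin (m+1+1)) = (m+1) + 1)]
    rw [← direction_affineSpan]
    exact hfinD
  refine ⟨hAIcons, ?_⟩
  have hDV : simplexDir (Fin.cons p'' v : Fin (m+1+1) → EuclideanSpace ℝ (Fin n)) ⊓ V = ⊥ := by
    rw [hD, eq_bot_iff]
    intro x hx
    rw [Submodule.mem_inf] at hx
    obtain ⟨hx, hxV⟩ := hx
    rw [Submodule.mem_sup] at hx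
    obtain ⟨g, hg, s, hs, rfl⟩ := hx
    obtain ⟨t, rfl⟩ := Submodule.mem_span_singleton.1 hs
    rcases eq_or_ne t 0 with rfl | ht
    · rw [zero_smul, add_zero] at hxV ⊢
      have hmem : g ∈ simplexDir v ⊓ V := Submodule.mem_inf.2 ⟨hg, hxV⟩
      rw [hdisj] at hmem
      simpa using hmem
    · exfalso
      apply hp
      have hw' : p'' - v 0 = t⁻¹ • ((g + t • (p'' - v 0)) - g) := by
        rw [add_sub_cancel_left, smul_smul, inv_mul_cancel₀ ht, one_smul]
      rw [hw']
      exact Submodule.smul_mem _ _ (Submodule.sub_mem _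
        (Submodule.mem_sup_right hxV) (Submodule.mem_sup_left hg))
  unfold Transv
  rw [hfinD]
  have h2 := Submodule.finrank_sup_add_finrank_inf_eq
    (simplexDir (Fin.cons p'' v : Fin (m+1+1) → EuclideanSpace ℝ (Fin n))) V
  rw [hDV, hfinD] at h2
  simp only [finrank_bot, add_zero] at h2
  rw [h2, min_eq_left hdim]

theorem stmt_17 (n k C : ℕ) (hk : k < n)
    (ε : ℝ) (hε : 0 < ε) (p : EuclideanSpace ℝ (Fin n))
    (dm : Fin C → ℕ) (vs : (c : Fin C) → Fin (dm c + 1) → EuclideanSpace ℝ (Fin n))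
    (hAI : ∀ c, AffineIndependent ℝ (vs c))
    (hT : ∀ c, Transv (simplexDir (vs c)) (stdFol n k)) :
    ∃ δ > (0:ℝ), ∃ p' : EuclideanSpace ℝ (Fin n), dist p' p < ε ∧
      Metric.ball p' δ ⊆ Metric.ball p ε ∧
      ∀ c, dm c < n - k → SemiT δ p' (vs c) (stdFol n k) := by
  classical
  set V := stdFol n k with hV
  have hfV : Module.finrank ℝ V ≤ k := stdFol_finrank_le n k hk.le
  -- dimension facts for each simplex
  have hfr : ∀ c, Module.finrank ℝ (simplexDir (vs c)) = dm c := by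
    intro c
    rw [simplexDir, direction_affineSpan]
    exact (hAI c).finrank_vectorSpan (by simp)
  have hsup : ∀ c, dm c < n - k →
      Module.finrank ℝ ↥(simplexDir (vs c) ⊔ V) = dm c + Module.finrank ℝ V := by
    intro c hc
    have hT' := hT c
    unfold Transv at hT'
    rw [hfr, min_eq_left (by omega)] at hT'
    exact hT'
  have hdisj : ∀ c, dm c < n - k → simplexDir (vs c) ⊓ V = ⊥ := by
    intro c hc
    have h2 := Submodule.finrank_sup_add_finrank_inf_eq (simplexDir (vs c)) V
    rw [hsup c hc, hfr] at h2
    have h3 : Module.finrank ℝ ↥(simplexDir (vs c) ⊓ V) = 0 := by omega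
    exact Submodule.finrank_eq_zero.1 h3
  -- the bad affine subspaces
  set A : Fin C → AffineSubspace ℝ (EuclideanSpace ℝ (Fin n)) :=
    fun c => AffineSubspace.mk' (vs c 0) (simplexDir (vs c) ⊔ V) with hA
  have hAne : ∀ c, dm c < n - k → A c ≠ ⊤ := by
    intro c hc htop
    have hd : (A c).direction = ⊤ := by rw [htop, AffineSubspace.direction_top]
    rw [hA, AffineSubspace.direction_mk'] at hd
    have := hsup c hc
    rw [hd, finrank_top, finrank_euclideanSpace_fin] at this
    omega
  set U : Set (EuclideanSpace ℝ (Fin n)) :=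
    ⋃ c ∈ {c : Fin C | dm c < n - k}, (A c : Set (EuclideanSpace ℝ (Fin n))) with hU
  have hU0 : MeasureTheory.volume U = 0 := by
    refine MeasureTheory.measure_iUnion_null fun c => MeasureTheory.measure_iUnion_null fun hc =>
      MeasureTheory.Measure.addHaar_affineSubspace _ _ (hAne c hc)
  have hclosed : IsClosed U :=
    Set.Finite.isClosed_biUnion (Set.toFinite _)
      (fun c _ => (A c).closed_of_finiteDimensional
        )
  have hvol : MeasureTheory.volume (ball p ε) ≠ 0 :=
    (measure_ball_pos MeasureTheory.volume p hε).ne'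
  have hne : (ball p ε \ U).Nonempty := by
    apply MeasureTheory.nonempty_of_measure_ne_zero (μ := MeasureTheory.volume)
    rw [MeasureTheory.measure_diff_null hU0]
    exact hvol
  obtain ⟨p', hp'ball, hp'U⟩ := hne
  have hopen : IsOpen (ball p ε ∩ Uᶜ) := isOpen_ball.inter hclosed.isOpen_compl
  obtain ⟨δ, hδ, hsub⟩ := Metric.isOpen_iff.1 hopen p' ⟨hp'ball, hp'U⟩
  refine ⟨δ, hδ, p', mem_ball.1 hp'ball, fun x hx => (hsub hx).1, ?_⟩
  intro c hc p'' hdist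
  have hp''mem : p'' ∈ ball p' δ := mem_ball.2 hdist
  have hp''U : p'' ∉ U := (hsub hp''mem).2
  have hnotA : p'' ∉ (A c : Set (EuclideanSpace ℝ (Fin n))) := by
    intro h
    exact hp''U (Set.mem_biUnion hc h)
  have hw : p'' - vs c 0 ∉ simplexDir (vs c) ⊔ V := by
    intro h
    apply hnotA
    rw [AffineSubspace.mem_coe, hA, AffineSubspace.mem_mk', vsub_eq_sub]
    exact h
  exact key_lemma (vs c) V (hdisj c hc) (hfr c) (by omega) p'' hw
end
end

section
/- Fix natural numbers k < n and let 𝔉 denote the constant foliation of ℝⁿ = ℝᵏ × ℝ^{n−k} by the translates of ℝᵏ × {0}. Let ε > 0 and C ∈ ℕ. Then there exists δ > 0 such that the following holds: for every point p ∈ ℝⁿ and every set 𝒟 of C linear simplices in ℝⁿ, each transverse to 𝔉, there exists a point p' ∈ B(p, ε) such that B(p', δ) ⊆ B(p, ε) and for every simplex Δ ∈ 𝒟 of dimension at most n − k − 1 the join p'⋆Δ is a non-degenerate linear simplex that is δ-semitransverse to 𝔉 in p'. -/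
noncomputable section

open Metric Set

section Aux
open Module MeasureTheory RealInnerProductSpace

lemma simplexDir_cons {n m : ℕ} (v : Fin (m+1) → EuclideanSpace ℝ (Fin n)) (q : EuclideanSpace ℝ (Fin n)) :
    simplexDir (Fin.cons q v : Fin (m+2) → EuclideanSpace ℝ (Fin n))
      = Submodule.span ℝ {q - v 0} ⊔ simplexDir v := by
  unfold simplexDir
  rw [Fin.range_cons, ← affineSpan_insert_affineSpan,
    AffineSubspace.direction_affineSpan_insert
      (mem_affineSpan ℝ (Set.mem_range_self 0))]
  rfl

lemma affineIndependent_cons {n m : ℕ} {v : Fin (m+1) → EuclideanSpace ℝ (Fin n)}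
    (hv : AffineIndependent ℝ v) {q : EuclideanSpace ℝ (Fin n)}
    (hq : q ∉ affineSpan ℝ (Set.range v)) :
    AffineIndependent ℝ (Fin.cons q v : Fin (m+2) → EuclideanSpace ℝ (Fin n)) := by
  apply AffineIndependent.affineIndependent_of_notMem_span (i := (0 : Fin (m+2)))
  · have he : Function.Injective
        (fun x : {y : Fin (m+2) // y ≠ 0} => (x : Fin (m+2)).pred x.2) := by
      rintro ⟨a, ha⟩ ⟨b, hb⟩ h
      simpa [Fin.pred_inj] using h
    have := hv.comp_embedding ⟨_, he⟩
    convert this using 1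
    case e'_4 => rfl
    funext x
    obtain ⟨j, hj⟩ := Fin.eq_succ_of_ne_zero x.2
    show (Fin.cons q v : Fin (m+2) → EuclideanSpace ℝ (Fin n)) x.1 = v ((x : Fin (m+2)).pred x.2)
    simp [hj]
  · rw [Fin.cons_zero]
    intro h
    apply hq
    refine affineSpan_mono ℝ ?_ h
    rintro y ⟨x, hx, rfl⟩
    rcases Fin.eq_succ_of_ne_zero (hx : x ≠ 0) with ⟨j, rfl⟩
    exact ⟨j, by simp⟩

lemma finrank_sup_span_singleton {n : ℕ} (D : Submodule ℝ (EuclideanSpace ℝ (Fin n))) {w : EuclideanSpace ℝ (Fin n)} (hw : w ∉ D) :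
    finrank ℝ ↥(D ⊔ Submodule.span ℝ {w}) = finrank ℝ ↥D + 1 := by
  have h0 : w ≠ 0 := fun h => hw (h ▸ D.zero_mem)
  have hinf : D ⊓ Submodule.span ℝ {w} = ⊥ := by
    rw [eq_bot_iff]
    rintro y ⟨hyD, hys⟩
    rcases Submodule.mem_span_singleton.1 hys with ⟨a, rfl⟩
    rcases eq_or_ne a 0 with rfl | ha
    · simp
    · exact absurd (by simpa [ha] using D.smul_mem a⁻¹ hyD) hw
  have h := Submodule.finrank_sup_add_finrank_inf_eq D (Submodule.span ℝ {w})
  rw [hinf, finrank_bot, finrank_span_singleton h0] at h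
  omega

lemma finrank_stdFol_le (n k : ℕ) (hkn : k ≤ n) :
    finrank ℝ ↥(stdFol n k) ≤ k := by
  let f : ↥(stdFol n k) →ₗ[ℝ] EuclideanSpace ℝ (Fin k) :=
    { toFun := fun x => WithLp.toLp 2 (fun j => (x : EuclideanSpace ℝ (Fin n)) (Fin.castLE hkn j))
      map_add' := fun x y => rfl
      map_smul' := fun c x => rfl }
  have hinj : Function.Injective f := by
    intro x y hxy
    ext i
    by_cases h : (i : ℕ) < k
    · have := congrFun (congrArg WithLp.ofLp hxy) ⟨i, h⟩
      simpa [f, Fin.castLE] using this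
    · show (x : EuclideanSpace ℝ (Fin n)) i = (y : EuclideanSpace ℝ (Fin n)) i
      rw [x.2 i (le_of_not_gt h), y.2 i (le_of_not_gt h)]
  calc finrank ℝ ↥(stdFol n k) ≤ finrank ℝ (EuclideanSpace ℝ (Fin k)) :=
        LinearMap.finrank_le_finrank_of_injective hinj
    _ = k := finrank_euclideanSpace_fin

lemma lemA (n C : ℕ) (hn : 0 < n) (hC : 0 < C) (r : ℝ) (hr : 0 < r) :
    ∃ δ > (0:ℝ), δ ≤ r ∧
      ∀ (u : Fin C → EuclideanSpace ℝ (Fin n)), (∀ c, ‖u c‖ = 1) →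
      ∀ s : Fin C → ℝ, ∃ x : EuclideanSpace ℝ (Fin n),
        ‖x‖ ≤ r ∧ ∀ c, δ ≤ |⟪u c, x⟫ - s c| := by
  haveI : Nonempty (Fin C) := ⟨⟨0, hC⟩⟩
  set E := EuclideanSpace ℝ (Fin n)
  set K : Set E := closedBall 0 r with hK
  -- the min-over-constraints function
  set m : (Fin C → E × ℝ) → E → ℝ :=
    fun w x => Finset.univ.inf' Finset.univ_nonempty (fun c => |⟪(w c).1, x⟫ - (w c).2|) with hm
  set g : (Fin C → E × ℝ) → ℝ := fun w => sSup (m w '' K) with hg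
  have h0K : (0:E) ∈ K := mem_closedBall_self hr.le
  have hAne : ∀ w, (m w '' K).Nonempty := fun w => ⟨m w 0, mem_image_of_mem _ h0K⟩
  have hbdd : ∀ w, BddAbove (m w '' K) := by
    intro w
    refine ⟨r * ‖(w (Classical.arbitrary _)).1‖ + |(w (Classical.arbitrary _)).2|, ?_⟩
    rintro y ⟨x, hx, rfl⟩
    refine le_trans (Finset.inf'_le _ (Finset.mem_univ (Classical.arbitrary _))) ?_
    calc |⟪(w (Classical.arbitrary _)).1, x⟫ - (w (Classical.arbitrary _)).2|
        ≤ |⟪(w (Classical.arbitrary _)).1, x⟫| + |(w (Classical.arbitrary _)).2| := abs_sub _ _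
      _ ≤ ‖(w (Classical.arbitrary _)).1‖ * ‖x‖ + |(w (Classical.arbitrary _)).2| := by
          gcongr; exact abs_real_inner_le_norm _ _
      _ ≤ r * ‖(w (Classical.arbitrary _)).1‖ + |(w (Classical.arbitrary _)).2| := by
          rw [mul_comm]
          gcongr
          exact mem_closedBall_zero_iff.1 hx
  -- one-sided Lipschitz bound for m
  have hdiff : ∀ w w' : Fin C → E × ℝ, ∀ x ∈ K, m w x ≤ m w' x + (r + 1) * dist w w' := by
    intro w w' x hx
    obtain ⟨c, -, hc⟩ := Finset.exists_mem_eq_inf' (Finset.univ_nonempty)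
      (fun c => |⟪(w' c).1, x⟫ - (w' c).2|)
    have h1 : m w x ≤ |⟪(w c).1, x⟫ - (w c).2| :=
      Finset.inf'_le _ (Finset.mem_univ c)
    have h2 : |⟪(w c).1, x⟫ - (w c).2| ≤ |⟪(w' c).1, x⟫ - (w' c).2| + (r + 1) * dist w w' := by
      have key : |(⟪(w c).1, x⟫ - (w c).2) - (⟪(w' c).1, x⟫ - (w' c).2)|
          ≤ (r + 1) * dist w w' := by
        have : (⟪(w c).1, x⟫ - (w c).2) - (⟪(w' c).1, x⟫ - (w' c).2)
            = ⟪(w c).1 - (w' c).1, x⟫ - ((w c).2 - (w' c).2) := by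
          rw [inner_sub_left]; ring
        rw [this]
        have hx' : ‖x‖ ≤ r := mem_closedBall_zero_iff.1 hx
        have hcc : dist (w c) (w' c) ≤ dist w w' := dist_le_pi_dist w w' c
        have hn1 : ‖(w c).1 - (w' c).1‖ ≤ dist w w' := by
          rw [← dist_eq_norm]
          exact le_trans (by rw [Prod.dist_eq]; exact le_max_left _ _) hcc
        have hn2 : |(w c).2 - (w' c).2| ≤ dist w w' := by
          rw [← Real.dist_eq]
          exact le_trans (by rw [Prod.dist_eq]; exact le_max_right _ _) hcc
        have hmul : ‖(w c).1 - (w' c).1‖ * ‖x‖ ≤ dist w w' * r :=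
          mul_le_mul hn1 hx' (norm_nonneg x) dist_nonneg
        calc |⟪(w c).1 - (w' c).1, x⟫ - ((w c).2 - (w' c).2)|
            ≤ |⟪(w c).1 - (w' c).1, x⟫| + |(w c).2 - (w' c).2| := abs_sub _ _
          _ ≤ ‖(w c).1 - (w' c).1‖ * ‖x‖ + |(w c).2 - (w' c).2| := by
              gcongr; exact abs_real_inner_le_norm _ _
          _ ≤ (r + 1) * dist w w' := by nlinarith
      have := abs_sub_abs_le_abs_sub (⟪(w c).1, x⟫ - (w c).2) (⟪(w' c).1, x⟫ - (w' c).2)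
      linarith [this.trans key]
    calc m w x ≤ |⟪(w c).1, x⟫ - (w c).2| := h1
      _ ≤ |⟪(w' c).1, x⟫ - (w' c).2| + (r + 1) * dist w w' := h2
      _ = m w' x + (r + 1) * dist w w' := by rw [← hc]
  have hglip : ∀ w w', g w ≤ g w' + (r + 1) * dist w w' := by
    intro w w'
    refine csSup_le (hAne w) ?_
    rintro y ⟨x, hx, rfl⟩
    exact (hdiff w w' x hx).trans
      (add_le_add_left (le_csSup (hbdd w') (mem_image_of_mem _ hx)) _)
  have hgcont : Continuous g := by
    refine (LipschitzWith.of_dist_le_mul (K := Real.toNNReal (r+1)) ?_).continuous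
    intro w w'
    rw [Real.dist_eq, Real.coe_toNNReal _ (by linarith)]
    rw [abs_sub_le_iff]
    constructor
    · have := hglip w w'; linarith
    · have := hglip w' w; rw [dist_comm] at this; linarith
  -- the compact parameter set
  set P : Set (Fin C → E × ℝ) :=
    Set.univ.pi (fun _ => sphere (0:E) 1 ×ˢ Icc (-(2*r)) (2*r)) with hP
  have hPc : IsCompact P :=
    isCompact_univ_pi fun _ => (isCompact_sphere _ _).prod isCompact_Icc
  have hPne : P.Nonempty := by
    refine ⟨fun _ => (EuclideanSpace.single ⟨0, hn⟩ (1:ℝ), 0), ?_⟩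
    intro c _
    constructor
    · show EuclideanSpace.single (⟨0, hn⟩ : Fin n) (1:ℝ) ∈ sphere (0:E) 1
      rw [mem_sphere_iff_norm, sub_zero, EuclideanSpace.norm_single]
      norm_num
    · show (0:ℝ) ∈ Icc (-(2*r)) (2*r)
      constructor <;> [linarith; linarith]
  -- positivity of g on P
  have hgpos : ∀ w ∈ P, 0 < g w := by
    intro w hw
    have hwu : ∀ c, ‖(w c).1‖ = 1 := fun c => by
      have := (hw c (Set.mem_univ c)).1
      simpa [mem_sphere_iff_norm] using this
    -- the bad hyperplanes
    set A : Fin C → Set E := fun c => {x | ⟪(w c).1, x⟫ = (w c).2} with hA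
    have hAnull : ∀ c, volume (A c) = 0 := by
      intro c
      set φ : E →ₗ[ℝ] ℝ := (innerSL ℝ ((w c).1) : E →L[ℝ] ℝ).toLinearMap with hφ
      have hAc : A c = ↑(AffineSubspace.mk' ((w c).2 • (w c).1) (LinearMap.ker φ)) := by
        ext x
        rw [AffineSubspace.mem_coe, AffineSubspace.mem_mk']
        show ⟪(w c).1, x⟫ = (w c).2 ↔ _
        rw [LinearMap.mem_ker]
        show _ ↔ ⟪(w c).1, x - (w c).2 • (w c).1⟫ = 0
        rw [inner_sub_right, real_inner_smul_right, real_inner_self_eq_norm_sq, hwu c]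
        constructor <;> intro h <;> nlinarith [h]
      rw [hAc]
      refine Measure.addHaar_affineSubspace _ _ ?_
      intro htop
      have : LinearMap.ker φ = ⊤ := by
        rw [← AffineSubspace.direction_mk' ((w c).2 • (w c).1) (LinearMap.ker φ), htop,
          AffineSubspace.direction_top]
      have hmem : (w c).1 ∈ LinearMap.ker φ := this ▸ Submodule.mem_top
      rw [LinearMap.mem_ker] at hmem
      have : ⟪(w c).1, (w c).1⟫ = (0:ℝ) := hmem
      rw [real_inner_self_eq_norm_sq, hwu c] at this
      norm_num at this
    have hUnull : volume (⋃ c, A c) = 0 := measure_iUnion_null hAnull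
    have hKpos : volume K ≠ 0 := (measure_closedBall_pos _ _ hr).ne'
    have hexists : ∃ x ∈ K, x ∉ ⋃ c, A c := by
      by_contra h
      push_neg at h
      exact hKpos (measure_mono_null h hUnull)
    obtain ⟨x, hxK, hxA⟩ := hexists
    have hmx : 0 < m w x := by
      rw [hm]
      rw [Finset.lt_inf'_iff]
      intro c _
      rw [abs_pos, sub_ne_zero]
      intro hEq
      exact hxA (Set.mem_iUnion.2 ⟨c, hEq⟩)
    exact lt_of_lt_of_le hmx (le_csSup (hbdd w) (mem_image_of_mem _ hxK))
  -- minimum over P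
  obtain ⟨w₀, hw₀P, hw₀min⟩ := hPc.exists_isMinOn hPne hgcont.continuousOn
  set δ₀ := g w₀ with hδ₀
  have hδ₀pos : 0 < δ₀ := hgpos w₀ hw₀P
  refine ⟨min (δ₀/2) r, lt_min (by linarith) hr, min_le_right _ _, ?_⟩
  intro u hu s
  set s' : Fin C → ℝ := fun c => max (-(2*r)) (min (2*r) (s c)) with hs'
  set w : Fin C → E × ℝ := fun c => (u c, s' c) with hw
  have hwP : w ∈ P := by
    intro c _
    constructor
    · simpa [mem_sphere_iff_norm] using hu c
    · exact ⟨le_max_left _ _, max_le (by linarith) (min_le_left _ _)⟩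
  have hgw : min (δ₀/2) r < g w := by
    calc min (δ₀/2) r ≤ δ₀/2 := min_le_left _ _
      _ < δ₀ := by linarith
      _ ≤ g w := hw₀min hwP
  obtain ⟨y, ⟨x, hxK, rfl⟩, hy⟩ := exists_lt_of_lt_csSup (hAne w) hgw
  refine ⟨x, mem_closedBall_zero_iff.1 hxK, ?_⟩
  intro c
  have hxnorm : ‖x‖ ≤ r := mem_closedBall_zero_iff.1 hxK
  have hinner : |⟪u c, x⟫| ≤ r := by
    calc |⟪u c, x⟫| ≤ ‖u c‖ * ‖x‖ := abs_real_inner_le_norm _ _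
      _ = ‖x‖ := by rw [hu c, one_mul]
      _ ≤ r := hxnorm
  have hsc : min (δ₀/2) r ≤ |⟪u c, x⟫ - s' c| :=
    le_of_lt (lt_of_lt_of_le hy (Finset.inf'_le _ (Finset.mem_univ c)))
  obtain ⟨hl, hr'⟩ := abs_le.1 hinner
  have hminr : min (δ₀/2) r ≤ r := min_le_right _ _
  by_cases h1 : s c ≤ 2*r
  · by_cases h2 : -(2*r) ≤ s c
    · have hs'c : s' c = s c := by
        show max (-(2*r)) (min (2*r) (s c)) = s c
        rw [min_eq_right h1, max_eq_right h2]
      rwa [hs'c] at hsc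
    · push_neg at h2
      rw [abs_of_pos (by linarith)]
      linarith
  · push_neg at h1
    rw [abs_of_neg (by linarith)]
    linarith

end Aux

open Module RealInnerProductSpace in
theorem stmt_18 (n k C : ℕ) (hk : k < n) (ε : ℝ) (hε : 0 < ε) :
    ∃ δ > (0:ℝ),
      ∀ (p : EuclideanSpace ℝ (Fin n)) (dm : Fin C → ℕ)
        (vs : (c : Fin C) → Fin (dm c + 1) → EuclideanSpace ℝ (Fin n)),
        (∀ c, AffineIndependent ℝ (vs c)) →
        (∀ c, Transv (simplexDir (vs c)) (stdFol n k)) →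
        ∃ p' : EuclideanSpace ℝ (Fin n), dist p' p < ε ∧
          Metric.ball p' δ ⊆ Metric.ball p ε ∧
          ∀ c, dm c < n - k → SemiT δ p' (vs c) (stdFol n k) := by
  have hn : 0 < n := lt_of_le_of_lt (Nat.zero_le k) hk
  rcases Nat.eq_zero_or_pos C with rfl | hC
  · refine ⟨ε/2, by linarith, ?_⟩
    intro p dm vs _ _
    exact ⟨p, by simpa using hε, ball_subset_ball (by linarith), fun c => c.elim0⟩
  obtain ⟨δ, hδpos, hδr, hsel⟩ := lemA n C hn hC (ε/4) (by linarith)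
  refine ⟨δ, hδpos, ?_⟩
  intro p dm vs hAI hT
  have hkv : finrank ℝ ↥(stdFol n k) ≤ k := finrank_stdFol_le n k hk.le
  have hG : ∀ c, finrank ℝ ↥(simplexDir (vs c)) = dm c := by
    intro c
    unfold simplexDir
    rw [direction_affineSpan]
    exact (hAI c).finrank_vectorSpan (by simp)
  -- choose normals
  have hu : ∀ c, ∃ u : EuclideanSpace ℝ (Fin n), ‖u‖ = 1 ∧
      (dm c < n - k → u ∈ (simplexDir (vs c) ⊔ stdFol n k)ᗮ) := by
    intro c
    by_cases h : dm c < n - k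
    · have hfr : finrank ℝ ↥(simplexDir (vs c) ⊔ stdFol n k) < n := by
        have hDc := hT c
        unfold Transv at hDc
        rw [hG c] at hDc
        have h1 : dm c + k < n := by omega
        have h2 : dm c + finrank ℝ ↥(stdFol n k) < n := by omega
        rw [min_eq_left h2.le] at hDc
        omega
      have hne : simplexDir (vs c) ⊔ stdFol n k ≠ ⊤ := by
        intro htop
        rw [htop, finrank_top, finrank_euclideanSpace_fin] at hfr
        omega
      have hbot : (simplexDir (vs c) ⊔ stdFol n k)ᗮ ≠ ⊥ := by
        rwa [Ne, Submodule.orthogonal_eq_bot_iff]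
      obtain ⟨v, hvD, hv0⟩ := Submodule.exists_mem_ne_zero_of_ne_bot hbot
      exact ⟨(‖v‖⁻¹ : ℝ) • v, norm_smul_inv_norm hv0,
        fun _ => Submodule.smul_mem _ _ hvD⟩
    · refine ⟨EuclideanSpace.single (⟨0, hn⟩ : Fin n) (1:ℝ), ?_, fun hc => absurd hc h⟩
      rw [EuclideanSpace.norm_single]
      norm_num
  choose u huNorm huD using hu
  obtain ⟨x, hxnorm, hxsep⟩ := hsel u huNorm (fun c => ⟪u c, vs c 0 - p⟫)
  refine ⟨p + x, ?_, ?_, ?_⟩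
  · rw [dist_eq_norm, add_sub_cancel_left]
    linarith
  · intro y hy
    rw [mem_ball] at hy ⊢
    calc dist y p ≤ dist y (p + x) + dist (p + x) p := dist_triangle _ _ _
      _ < δ + ε/4 := by
          have hpx : dist (p + x) p ≤ ε/4 := by
            rw [dist_eq_norm, add_sub_cancel_left]; exact hxnorm
          exact add_lt_add_of_lt_of_le hy hpx
      _ ≤ ε := by linarith
  · intro c hc q hq
    -- key separation
    have hqn : 0 < |⟪u c, q - vs c 0⟫| := by
      have e1 : ⟪u c, q - vs c 0⟫
          = (⟪u c, x⟫ - ⟪u c, vs c 0 - p⟫) + ⟪u c, q - (p + x)⟫ := by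
        rw [← inner_sub_right, ← inner_add_right]
        congr 1
        abel
      have e2 : |⟪u c, q - (p + x)⟫| ≤ dist q (p + x) := by
        calc |⟪u c, q - (p + x)⟫| ≤ ‖u c‖ * ‖q - (p + x)‖ := abs_real_inner_le_norm _ _
          _ = dist q (p + x) := by rw [huNorm c, one_mul, dist_eq_norm]
      have h3 := hxsep c
      have h4 : |⟪u c, x⟫ - ⟪u c, vs c 0 - p⟫|
          ≤ |⟪u c, q - vs c 0⟫| + |⟪u c, q - (p + x)⟫| := by
        rw [e1]
        exact (abs_sub _ _).trans_eq' (by ring_nf)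
      linarith
    have hqD : q - vs c 0 ∉ simplexDir (vs c) ⊔ stdFol n k := by
      intro hmem
      have h0 : ⟪q - vs c 0, u c⟫ = 0 :=
        (Submodule.mem_orthogonal _ _).1 (huD c hc) _ hmem
      rw [real_inner_comm] at h0
      rw [h0, abs_zero] at hqn
      exact lt_irrefl _ hqn
    have hqspan : q ∉ affineSpan ℝ (Set.range (vs c)) := by
      intro hmem
      apply hqD
      apply Submodule.mem_sup_left
      have := AffineSubspace.vsub_mem_direction hmem
        (mem_affineSpan ℝ (Set.mem_range_self 0))
      simpa [simplexDir, vsub_eq_sub] using this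
    have hind : AffineIndependent ℝ (Fin.cons q (vs c) : Fin (dm c + 2) → EuclideanSpace ℝ (Fin n)) :=
      affineIndependent_cons (hAI c) hqspan
    refine ⟨hind, ?_⟩
    unfold Transv
    have hGfin : finrank ℝ ↥(simplexDir (Fin.cons q (vs c) : Fin (dm c + 2) → EuclideanSpace ℝ (Fin n))) = dm c + 1 := by
      unfold simplexDir
      rw [direction_affineSpan]
      exact hind.finrank_vectorSpan (by simp)
    rw [hGfin]
    have hsup : simplexDir (Fin.cons q (vs c) : Fin (dm c + 2) → EuclideanSpace ℝ (Fin n)) ⊔ stdFol n k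
        = (simplexDir (vs c) ⊔ stdFol n k) ⊔ Submodule.span ℝ {q - vs c 0} := by
      rw [simplexDir_cons,
        sup_comm (Submodule.span ℝ {q - vs c 0}) (simplexDir (vs c)), sup_right_comm]
    rw [hsup, finrank_sup_span_singleton _ hqD]
    have hDc := hT c
    unfold Transv at hDc
    rw [hG c] at hDc
    have h2 : dm c + finrank ℝ ↥(stdFol n k) < n := by omega
    rw [min_eq_left h2.le] at hDc
    rw [hDc, min_eq_left (by omega)]
    omega
end
end
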